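/- Let m ≥ 1, let M, N ⊆ [m] with M ≠ ∅ and N ⊊ [m], and let D = aΔ_M + cΔ_N^c ⊆ E^m. Then the linear left-E-code C^L_D has length |D| = 2^{|M|}(2^m−2^{|N|}) and size |C^L_D| = 2^{2|M|}, and the multiset {wt_Lee(c^L_D(v)) : v ∈ E^m} (with multiplicity over all 2^{2m} elements v ∈ E^m) consists of: 2^{|M|}(2^m−2^{|N|}) with multiplicity 2^{2m}−2^{2m−|M|+1}+2^{2m−2|M|}; 2^{|M|−1}(2^m−2^{|N|}) with multiplicity 2^{2m−|M|+1}−2^{2m−2|M|+1}; and 0 with multiplicity 2^{2m−2|M|}. -/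

import Mathlib

open Finset

/-- The simplicial complex `Δ_M ⊆ 𝔽₂^m` generated by `M ⊆ [m]`:
all vectors whose support is contained in `M`. -/
def deltaC {m : ℕ} (M : Finset (Fin m)) : Finset (Fin m → ZMod 2) :=
  Finset.univ.filter (fun w => ∀ i, w i ≠ 0 → i ∈ M)

/-- Dot product over `𝔽₂`. -/
def dotp {m : ℕ} (x y : Fin m → ZMod 2) : ZMod 2 := ∑ i, x i * y i

/-- The Gray map on a single element `a·s + c·t ↔ (s, t)` of `E = 𝔽₂ × 𝔽₂`:
`Φ(as + ct) = (t, s + t)`. -/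
def grayPair (e : ZMod 2 × ZMod 2) : Fin 2 → ZMod 2 := ![e.2, e.1 + e.2]

/-- The left codeword `c^L_D(v)` for `v = aα + cβ ↔ (α, β)`:
its coordinate at `d = (t₁, t₂) ∈ D` is `a(α·t₁) + c(β·t₁) ↔ (α·t₁, β·t₁)`. -/
def cwL {m : ℕ} (Ds : Finset ((Fin m → ZMod 2) × (Fin m → ZMod 2)))
    (v : (Fin m → ZMod 2) × (Fin m → ZMod 2)) :
    {d // d ∈ Ds} → ZMod 2 × ZMod 2 :=
  fun d => (dotp v.1 d.1.1, dotp v.2 d.1.1)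

/-- The Gray image `Φ(c^L_D(v)) ∈ 𝔽₂^{2|D|}` of the left codeword `c^L_D(v)`;
its Hamming weight (`hammingNorm`) is the Lee weight of `c^L_D(v)`. -/
def gcwL {m : ℕ} (Ds : Finset ((Fin m → ZMod 2) × (Fin m → ZMod 2)))
    (v : (Fin m → ZMod 2) × (Fin m → ZMod 2)) :
    {d // d ∈ Ds} × Fin 2 → ZMod 2 :=
  fun x => grayPair (cwL Ds v x.1) x.2

/-- The right codeword `c^R_D(v)` for `v = aα + cβ ↔ (α, β)`:
its coordinate at `d = (t₁, t₂) ∈ D` is `a(t₁·α) + c(t₂·α) ↔ (t₁·α, t₂·α)`. -/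
def cwR {m : ℕ} (Ds : Finset ((Fin m → ZMod 2) × (Fin m → ZMod 2)))
    (v : (Fin m → ZMod 2) × (Fin m → ZMod 2)) :
    {d // d ∈ Ds} → ZMod 2 × ZMod 2 :=
  fun d => (dotp d.1.1 v.1, dotp d.1.2 v.1)

/-- The Gray image `Φ(c^R_D(v)) ∈ 𝔽₂^{2|D|}` of the right codeword `c^R_D(v)`;
its Hamming weight (`hammingNorm`) is the Lee weight of `c^R_D(v)`. -/
def gcwR {m : ℕ} (Ds : Finset ((Fin m → ZMod 2) × (Fin m → ZMod 2)))
    (v : (Fin m → ZMod 2) × (Fin m → ZMod 2)) :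
    {d // d ∈ Ds} × Fin 2 → ZMod 2 :=
  fun x => grayPair (cwR Ds v x.1) x.2

namespace StmtAux
variable {m : ℕ}

lemma mem_deltaC {M : Finset (Fin m)} {w : Fin m → ZMod 2} :
    w ∈ deltaC M ↔ ∀ i ∉ M, w i = 0 := by
  simp only [deltaC, mem_filter, mem_univ, true_and]
  constructor
  · intro h i hi; by_contra hw; exact hi (h i hw)
  · intro h i hw; by_contra hi; exact hw (h i hi)

lemma card_deltaC (M : Finset (Fin m)) : (deltaC M).card = 2 ^ M.card := by
  have h : (deltaC M).card = (Finset.univ : Finset (↥M → ZMod 2)).card := by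
    apply Finset.card_nbij' (fun w => fun i : ↥M => w i.1)
      (fun f => fun j => if h : j ∈ M then f ⟨j, h⟩ else 0)
    · intro w hw; exact mem_univ _
    · intro f hf
      rw [Finset.mem_coe, mem_deltaC]; intro i hi; exact dif_neg hi
    · intro w hw; funext j
      by_cases h : j ∈ M
      · simp [h]
      · simp [h, (mem_deltaC.1 hw) j h]
    · intro f hf; funext j; simp
  rw [h, Finset.card_univ, Fintype.card_fun, ZMod.card, Fintype.card_coe]

lemma dotp_add_left (x y t : Fin m → ZMod 2) :
    dotp (x + y) t = dotp x t + dotp y t := by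
  simp [dotp, add_mul, Finset.sum_add_distrib]

lemma dotp_single (γ : Fin m → ZMod 2) (i : Fin m) :
    dotp γ (Pi.single i 1) = γ i := by
  simp [dotp, Pi.single_apply, mul_ite]

lemma single_mem_deltaC {M : Finset (Fin m)} {i : Fin m} (h : i ∈ M) :
    Pi.single i 1 ∈ deltaC M := by
  rw [mem_deltaC]; intro j hj
  exact Pi.single_eq_of_ne (fun he : j = i => hj (he ▸ h)) 1

lemma dotp_eq_zero {M : Finset (Fin m)} {γ t : Fin m → ZMod 2}
    (hγ : γ ∈ deltaC Mᶜ) (ht : t ∈ deltaC M) : dotp γ t = 0 := by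
  rw [mem_deltaC] at hγ ht
  apply Finset.sum_eq_zero
  intro i _
  by_cases h : i ∈ M
  · rw [hγ i (by simpa using h), zero_mul]
  · rw [ht i h, mul_zero]

lemma not_mem_deltaC_compl {M : Finset (Fin m)} {γ : Fin m → ZMod 2} :
    γ ∉ deltaC Mᶜ ↔ ∃ i ∈ M, γ i ≠ 0 := by
  rw [mem_deltaC]; push_neg; simp [Finset.mem_compl]

lemma add_mem_deltaC {M : Finset (Fin m)} {x y : Fin m → ZMod 2}
    (hx : x ∈ deltaC M) (hy : y ∈ deltaC M) : x + y ∈ deltaC M := by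
  rw [mem_deltaC] at *
  intro i hi
  simp [hx i hi, hy i hi]

/-- The Lee-weight contribution of one `𝔽₂`-component over `Δ_M`. -/
def wgt (M : Finset (Fin m)) (γ : Fin m → ZMod 2) : ℕ :=
  ((deltaC M).filter (fun t => dotp γ t ≠ 0)).card

lemma wgt_zero {M : Finset (Fin m)} {γ : Fin m → ZMod 2}
    (hγ : γ ∈ deltaC Mᶜ) : wgt M γ = 0 := by
  rw [wgt, Finset.card_eq_zero, Finset.filter_eq_empty_iff]
  intro t ht
  simp [dotp_eq_zero hγ ht]

lemma wgt_half {M : Finset (Fin m)} {γ : Fin m → ZMod 2}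
    (hγ : γ ∉ deltaC Mᶜ) : wgt M γ = 2 ^ (M.card - 1) := by
  obtain ⟨i, hiM, hγi⟩ := not_mem_deltaC_compl.1 hγ
  have hk : 1 ≤ M.card := Finset.card_pos.2 ⟨i, hiM⟩
  set t₀ : Fin m → ZMod 2 := Pi.single i 1 with ht₀def
  have ht₀ : t₀ ∈ deltaC M := single_mem_deltaC hiM
  have hd : dotp γ t₀ ≠ 0 := by rw [ht₀def, dotp_single]; exact hγi
  have key : ∀ t, dotp γ (t + t₀) = dotp γ t + dotp γ t₀ := by
    intro t
    simp [dotp, mul_add, Finset.sum_add_distrib]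
  have hswap : ∀ t, dotp γ t ≠ 0 → dotp γ (t + t₀) = 0 := by
    intro t ht
    rw [key]
    revert ht hd; generalize dotp γ t = x; generalize dotp γ t₀ = y
    revert x y; decide
  have hswap' : ∀ t, dotp γ t = 0 → dotp γ (t + t₀) ≠ 0 := by
    intro t ht
    rw [key, ht, zero_add]; exact hd
  have hcanc : ∀ t : Fin m → ZMod 2, t + t₀ + t₀ = t := by
    intro t; funext j
    show t j + t₀ j + t₀ j = t j
    generalize t j = x; generalize t₀ j = y; revert x y; decide
  have hcards : ((deltaC M).filter (fun t => dotp γ t ≠ 0)).card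
      = ((deltaC M).filter (fun t => ¬ dotp γ t ≠ 0)).card := by
    apply Finset.card_nbij' (fun t => t + t₀) (fun t => t + t₀)
    · intro t ht
      simp only [Finset.mem_coe] at ht ⊢
      rw [Finset.mem_filter] at *
      exact ⟨add_mem_deltaC ht.1 ht₀, by simp [hswap t ht.2]⟩
    · intro t ht
      simp only [Finset.mem_coe] at ht ⊢
      rw [Finset.mem_filter] at *
      refine ⟨add_mem_deltaC ht.1 ht₀, hswap' t (by simpa using ht.2)⟩
    · intro t _; exact hcanc t
    · intro t _; exact hcanc t
  have htot := Finset.card_filter_add_card_filter_not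
    (s := deltaC M) (p := fun t => dotp γ t ≠ 0)
  rw [card_deltaC] at htot
  have hpow : 2 ^ M.card = 2 * 2 ^ (M.card - 1) := by
    rw [← pow_succ']
    congr 1
    omega
  rw [wgt]
  omega

lemma norm_gcwL (M N : Finset (Fin m))
    (Ds : Finset ((Fin m → ZMod 2) × (Fin m → ZMod 2)))
    (hDs : Ds = deltaC M ×ˢ (deltaC N)ᶜ)
    (v : (Fin m → ZMod 2) × (Fin m → ZMod 2)) :
    hammingNorm (gcwL Ds v) = ((deltaC N)ᶜ).card * (wgt M v.2 + wgt M (v.1 + v.2)) := by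
  have h1 : hammingNorm (gcwL Ds v)
      = ∑ x : {d // d ∈ Ds} × Fin 2, (if gcwL Ds v x ≠ 0 then 1 else 0) := by
    rw [hammingNorm, Finset.card_filter]
  rw [h1, Fintype.sum_prod_type]
  have h2 : ∀ a : {d // d ∈ Ds},
      (∑ b : Fin 2, if gcwL Ds v (a, b) ≠ 0 then 1 else 0)
      = (if dotp v.2 a.1.1 ≠ 0 then 1 else 0)
        + (if dotp (v.1 + v.2) a.1.1 ≠ 0 then 1 else 0) := by
    intro a
    rw [Fin.sum_univ_two]
    simp only [gcwL, grayPair, cwL, Matrix.cons_val_zero, Matrix.cons_val_one,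
      Matrix.head_cons, dotp_add_left]
    rfl
  simp only [h2]
  rw [Finset.sum_coe_sort Ds (fun d => (if dotp v.2 d.1 ≠ 0 then (1:ℕ) else 0)
        + (if dotp (v.1 + v.2) d.1 ≠ 0 then 1 else 0))]
  rw [hDs, Finset.sum_product]
  have h3 : ∀ t₁ ∈ deltaC M, (∑ _t₂ ∈ (deltaC N)ᶜ,
      ((if dotp v.2 t₁ ≠ 0 then (1:ℕ) else 0)
        + (if dotp (v.1 + v.2) t₁ ≠ 0 then 1 else 0)))
      = ((deltaC N)ᶜ).card * ((if dotp v.2 t₁ ≠ 0 then (1:ℕ) else 0)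
        + (if dotp (v.1 + v.2) t₁ ≠ 0 then 1 else 0)) := by
    intro t₁ _
    rw [Finset.sum_const, smul_eq_mul]
  rw [Finset.sum_congr rfl h3, ← Finset.mul_sum]
  congr 1
  rw [Finset.sum_add_distrib, wgt, wgt, Finset.card_filter, Finset.card_filter]

lemma filter_eq_prod (P Q : Finset (Fin m → ZMod 2)) :
    (Finset.univ : Finset ((Fin m → ZMod 2) × (Fin m → ZMod 2))).filter
      (fun v => v.1 ∈ Q ∧ v.2 ∈ P) = Q ×ˢ P := by
  ext v; simp [Finset.mem_product]

lemma card_shear (P Q : Finset (Fin m → ZMod 2)) :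
    ((Finset.univ : Finset ((Fin m → ZMod 2) × (Fin m → ZMod 2))).filter
      (fun v => v.1 + v.2 ∈ Q ∧ v.2 ∈ P)).card = Q.card * P.card := by
  rw [← Finset.card_product Q P, ← filter_eq_prod]
  have hcanc : ∀ x y : Fin m → ZMod 2, x + y + y = x := by
    intro x y; funext j
    show x j + y j + y j = x j
    generalize x j = s; generalize y j = t; revert s t; decide
  apply Finset.card_nbij' (fun v => (v.1 + v.2, v.2)) (fun v => (v.1 + v.2, v.2))
  · intro v hv
    simp only [Finset.mem_coe] at hv ⊢
    rw [Finset.mem_filter] at *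
    exact ⟨mem_univ _, hv.2.1, hv.2.2⟩
  · intro v hv
    simp only [Finset.mem_coe] at hv ⊢
    rw [Finset.mem_filter] at *
    exact ⟨mem_univ _, by rw [hcanc]; exact hv.2.1, hv.2.2⟩
  · intro v _; exact Prod.ext (hcanc v.1 v.2) rfl
  · intro v _; exact Prod.ext (hcanc v.1 v.2) rfl

end StmtAux

open StmtAux
theorem stmt_2 {m : ℕ} (hm : 1 ≤ m) (M N : Finset (Fin m))
    (hM : M ≠ ∅) (hNu : N ≠ Finset.univ)
    (Ds : Finset ((Fin m → ZMod 2) × (Fin m → ZMod 2)))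
    (hDs : Ds = deltaC M ×ˢ (deltaC N)ᶜ) :
    Ds.card = 2 ^ M.card * (2 ^ m - 2 ^ N.card) ∧
    ((Finset.univ : Finset ((Fin m → ZMod 2) × (Fin m → ZMod 2))).image (cwL Ds)).card = 2 ^ (2 * M.card) ∧
    (Finset.univ : Finset ((Fin m → ZMod 2) × (Fin m → ZMod 2))).val.map (fun v => hammingNorm (gcwL Ds v)) =
      Multiset.replicate (2 ^ (2 * m) + 2 ^ (2 * m - 2 * M.card) - 2 ^ (2 * m - M.card + 1))
          (2 ^ M.card * (2 ^ m - 2 ^ N.card)) +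
      Multiset.replicate (2 ^ (2 * m - M.card + 1) - 2 ^ (2 * m - 2 * M.card + 1))
          (2 ^ (M.card - 1) * (2 ^ m - 2 ^ N.card)) +
      Multiset.replicate (2 ^ (2 * m - 2 * M.card))
          (0) := by
  classical
  subst hDs
  set k := M.card with hkdef
  have hk : 1 ≤ k := Finset.card_pos.2 (Finset.nonempty_iff_ne_empty.2 hM)
  have hkm : k ≤ m := by
    have := Finset.card_le_univ M
    simpa [Finset.card_univ] using this
  have hnm : N.card ≤ m := by
    have := Finset.card_le_univ N
    simpa [Finset.card_univ] using this
  have hunivcard : Fintype.card (Fin m → ZMod 2) = 2 ^ m := by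
    rw [Fintype.card_fun, ZMod.card, Fintype.card_fin]
  have hcompl : ((deltaC N)ᶜ).card = 2 ^ m - 2 ^ N.card := by
    rw [Finset.card_compl, card_deltaC, hunivcard]
  -- Conjunct 1
  have hc1 : (deltaC M ×ˢ (deltaC N)ᶜ).card = 2 ^ k * (2 ^ m - 2 ^ N.card) := by
    rw [Finset.card_product, card_deltaC, hcompl]
  -- a nonzero element of (deltaC N)ᶜ
  obtain ⟨i0, hi0⟩ : ∃ i, i ∉ N := by
    by_contra h; push_neg at h; exact hNu (Finset.eq_univ_iff_forall.2 h)
  have ht2c : (Pi.single i0 1 : Fin m → ZMod 2) ∈ (deltaC N)ᶜ := by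
    rw [Finset.mem_compl, mem_deltaC]
    push_neg
    exact ⟨i0, hi0, by simp⟩
  -- Conjunct 2
  have hc2 : ((Finset.univ : Finset ((Fin m → ZMod 2) × (Fin m → ZMod 2))).image
      (cwL (deltaC M ×ˢ (deltaC N)ᶜ))).card = 2 ^ (2 * k) := by
    have hproj : ∀ (γ : Fin m → ZMod 2), (fun i => if i ∈ M then γ i else 0) ∈ deltaC M := by
      intro γ
      rw [mem_deltaC]; intro i hi; simp [hi]
    have hdotproj : ∀ (γ t : Fin m → ZMod 2), t ∈ deltaC M →
        dotp γ t = dotp (fun i => if i ∈ M then γ i else 0) t := by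
      intro γ t ht
      rw [mem_deltaC] at ht
      apply Finset.sum_congr rfl
      intro i _
      by_cases h : i ∈ M
      · simp [h]
      · simp [ht i h]
    have himgeq : ((Finset.univ : Finset ((Fin m → ZMod 2) × (Fin m → ZMod 2))).image
        (cwL (deltaC M ×ˢ (deltaC N)ᶜ)))
        = (deltaC M ×ˢ deltaC M).image (cwL (deltaC M ×ˢ (deltaC N)ᶜ)) := by
      apply Finset.Subset.antisymm
      · intro f hf
        rw [Finset.mem_image] at *
        obtain ⟨v, _, rfl⟩ := hf
        refine ⟨((fun i => if i ∈ M then v.1 i else 0), (fun i => if i ∈ M then v.2 i else 0)),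
          Finset.mem_product.2 ⟨hproj _, hproj _⟩, ?_⟩
        funext d
        have hd1 : d.1.1 ∈ deltaC M := (Finset.mem_product.1 d.2).1
        show (dotp _ d.1.1, dotp _ d.1.1) = (dotp v.1 d.1.1, dotp v.2 d.1.1)
        rw [← hdotproj v.1 _ hd1, ← hdotproj v.2 _ hd1]
      · exact Finset.image_subset_image (Finset.subset_univ _)
    rw [himgeq]
    have hinj : Set.InjOn (cwL (deltaC M ×ˢ (deltaC N)ᶜ))
        ((deltaC M ×ˢ deltaC M : Finset _) : Set _) := by
      intro v₁ h₁ v₂ h₂ heq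
      rw [Finset.mem_coe, Finset.mem_product] at h₁ h₂
      have key : ∀ i ∈ M, v₁.1 i = v₂.1 i ∧ v₁.2 i = v₂.2 i := by
        intro i hi
        have hd : ((Pi.single i 1 : Fin m → ZMod 2), (Pi.single i0 1 : Fin m → ZMod 2))
            ∈ deltaC M ×ˢ (deltaC N)ᶜ :=
          Finset.mem_product.2 ⟨single_mem_deltaC hi, ht2c⟩
        have hcf := congrFun heq ⟨_, hd⟩
        simp only [cwL, dotp_single, Prod.mk.injEq] at hcf
        exact hcf
      have h1e : v₁.1 = v₂.1 := by
        funext i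
        by_cases h : i ∈ M
        · exact (key i h).1
        · rw [(mem_deltaC.1 h₁.1) i h, (mem_deltaC.1 h₂.1) i h]
      have h2e : v₁.2 = v₂.2 := by
        funext i
        by_cases h : i ∈ M
        · exact (key i h).2
        · rw [(mem_deltaC.1 h₁.2) i h, (mem_deltaC.1 h₂.2) i h]
      exact Prod.ext h1e h2e
    rw [Finset.card_image_of_injOn hinj, Finset.card_product, card_deltaC, two_mul, pow_add]
  -- Conjunct 3
  refine ⟨hc1, hc2, ?_⟩
  set X : Finset (Fin m → ZMod 2) := deltaC Mᶜ with hXdef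
  have hXcard : X.card = 2 ^ (m - k) := by
    rw [hXdef, card_deltaC, Finset.card_compl, Fintype.card_fin]
  have hXccard : Xᶜ.card = 2 ^ m - 2 ^ (m - k) := by
    rw [Finset.card_compl, hXcard, hunivcard]
  set K : ℕ := 2 ^ m - 2 ^ N.card with hKdef
  set a : ℕ := 2 ^ (m - k) with hadef
  set f : ((Fin m → ZMod 2) × (Fin m → ZMod 2)) → ℕ :=
    fun v => hammingNorm (gcwL (deltaC M ×ˢ (deltaC N)ᶜ) v) with hfdef
  have hval : ∀ v, f v = K * (wgt M v.2 + wgt M (v.1 + v.2)) := by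
    intro v
    show hammingNorm (gcwL (deltaC M ×ˢ (deltaC N)ᶜ) v) = _
    rw [norm_gcwL M N _ rfl v, hcompl]
  set U : Multiset ((Fin m → ZMod 2) × (Fin m → ZMod 2)) :=
    (Finset.univ : Finset ((Fin m → ZMod 2) × (Fin m → ZMod 2))).val with hUdef
  -- decompose
  have hsplit : U.map f
      = ((U.filter (fun v => v.2 ∈ X)).filter (fun v => v.1 + v.2 ∈ X)).map f + ((U.filter (fun v => v.2 ∈ X)).filter (fun v => ¬ v.1 + v.2 ∈ X)).map f
        + (((U.filter (fun v => ¬ v.2 ∈ X)).filter (fun v => v.1 + v.2 ∈ X)).map f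
        + ((U.filter (fun v => ¬ v.2 ∈ X)).filter (fun v => ¬ v.1 + v.2 ∈ X)).map f) := by
    rw [← Multiset.map_add, ← Multiset.map_add, Multiset.filter_add_not, Multiset.filter_add_not,
      ← Multiset.map_add, Multiset.filter_add_not]
  -- constant values on each piece
  have hval11 : ∀ v ∈ (U.filter (fun v => v.2 ∈ X)).filter (fun v => v.1 + v.2 ∈ X), f v = 0 := by
    intro v hv
    rw [Multiset.mem_filter, Multiset.mem_filter] at hv
    rw [hval, wgt_zero hv.1.2, wgt_zero hv.2]; ring
  have hval10 : ∀ v ∈ (U.filter (fun v => v.2 ∈ X)).filter (fun v => ¬ v.1 + v.2 ∈ X), f v = 2 ^ (k - 1) * K := by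
    intro v hv
    rw [Multiset.mem_filter, Multiset.mem_filter] at hv
    rw [hval, wgt_zero hv.1.2, wgt_half hv.2]; ring
  have hval01 : ∀ v ∈ (U.filter (fun v => ¬ v.2 ∈ X)).filter (fun v => v.1 + v.2 ∈ X), f v = 2 ^ (k - 1) * K := by
    intro v hv
    rw [Multiset.mem_filter, Multiset.mem_filter] at hv
    rw [hval, wgt_half hv.1.2, wgt_zero hv.2]; ring
  have hval00 : ∀ v ∈ (U.filter (fun v => ¬ v.2 ∈ X)).filter (fun v => ¬ v.1 + v.2 ∈ X),
      f v = 2 ^ k * K := by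
    intro v hv
    rw [Multiset.mem_filter, Multiset.mem_filter] at hv
    rw [hval, wgt_half hv.1.2, wgt_half hv.2]
    have h2k : 2 ^ k = 2 * 2 ^ (k - 1) := by
      rw [← pow_succ']; congr 1; omega
    rw [h2k]; ring
  -- cardinalities via the shear bijection
  have hcard_gen : ∀ (P Q : Finset (Fin m → ZMod 2)),
      Multiset.card ((U.filter (fun v => v.2 ∈ P)).filter (fun v => v.1 + v.2 ∈ Q))
        = Q.card * P.card := by
    intro P Q
    rw [Multiset.filter_filter]
    have : Multiset.filter (fun v => v.1 + v.2 ∈ Q ∧ v.2 ∈ P) U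
        = ((Finset.univ : Finset ((Fin m → ZMod 2) × (Fin m → ZMod 2))).filter
            (fun v => v.1 + v.2 ∈ Q ∧ v.2 ∈ P)).val := by
      rw [Finset.filter_val, hUdef]
    rw [this]
    show ((Finset.univ : Finset _).filter _).card = _
    exact card_shear P Q
  have hmemX : ∀ v : ((Fin m → ZMod 2) × (Fin m → ZMod 2)), (¬ v.2 ∈ X) ↔ v.2 ∈ Xᶜ := by
    intro v; simp [Finset.mem_compl]
  have hmemX' : ∀ v : ((Fin m → ZMod 2) × (Fin m → ZMod 2)), (¬ v.1 + v.2 ∈ X) ↔ v.1 + v.2 ∈ Xᶜ := by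
    intro v; simp [Finset.mem_compl]
  have hfc0 : U.filter (fun v => ¬ v.2 ∈ X) = U.filter (fun v => v.2 ∈ Xᶜ) := by
    apply Multiset.filter_congr; intro v _; exact hmemX v
  have hc11 : Multiset.card ((U.filter (fun v => v.2 ∈ X)).filter (fun v => v.1 + v.2 ∈ X)) = a * a := by
    rw [hcard_gen X X, hXcard]
  have hc10 : Multiset.card ((U.filter (fun v => v.2 ∈ X)).filter (fun v => ¬ v.1 + v.2 ∈ X)) = (2 ^ m - a) * a := by
    have : (U.filter (fun v => v.2 ∈ X)).filter (fun v => ¬ v.1 + v.2 ∈ X)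
        = (U.filter (fun v => v.2 ∈ X)).filter (fun v => v.1 + v.2 ∈ Xᶜ) := by
      apply Multiset.filter_congr; intro v _; exact hmemX' v
    rw [this, hcard_gen X Xᶜ, hXccard, hXcard]
  have hc01 : Multiset.card ((U.filter (fun v => ¬ v.2 ∈ X)).filter (fun v => v.1 + v.2 ∈ X)) = a * (2 ^ m - a) := by
    rw [hfc0, hcard_gen Xᶜ X, hXcard, hXccard]
  have hc00 : Multiset.card ((U.filter (fun v => ¬ v.2 ∈ X)).filter (fun v => ¬ v.1 + v.2 ∈ X))
      = (2 ^ m - a) * (2 ^ m - a) := by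
    have : (U.filter (fun v => ¬ v.2 ∈ X)).filter (fun v => ¬ v.1 + v.2 ∈ X)
        = (U.filter (fun v => v.2 ∈ Xᶜ)).filter (fun v => v.1 + v.2 ∈ Xᶜ) := by
      rw [← hfc0]
      apply Multiset.filter_congr; intro v _; exact hmemX' v
    rw [this, hcard_gen Xᶜ Xᶜ, hXccard]
  -- turn each piece into a replicate
  have hrep : ∀ (s : Multiset ((Fin m → ZMod 2) × (Fin m → ZMod 2))) (c : ℕ),
      (∀ v ∈ s, f v = c) → s.map f = Multiset.replicate (Multiset.card s) c := by
    intro s c hc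
    rw [Multiset.map_congr rfl hc, Multiset.map_const']
  rw [hsplit, hrep _ _ hval11, hrep _ _ hval10, hrep _ _ hval01, hrep _ _ hval00,
    hc11, hc10, hc01, hc00]
  -- arithmetic
  set b : ℕ := 2 ^ k with hbdef
  have hab : a * b = 2 ^ m := by
    rw [hadef, hbdef, ← pow_add]; congr 1; omega
  have hb1 : 1 ≤ b := Nat.one_le_two_pow
  have hale : a ≤ a * b := Nat.le_mul_of_pos_right a (by omega)
  set c : ℕ := a * b - a with hcdef
  have hacb : a * b = a + c := by omega
  have e2m : 2 ^ (2 * m) = (a * b) * (a * b) := by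
    rw [hab, ← pow_add]; congr 1; omega
  have e2m2k : 2 ^ (2 * m - 2 * k) = a * a := by
    rw [hadef, ← pow_add]; congr 1; omega
  have e2mk1 : 2 ^ (2 * m - k + 1) = 2 * (a * (a * b)) := by
    have h : (2:ℕ) ^ (2 * m - k + 1) = 2 ^ ((m - k) + ((m - k) + k) + 1) := by
      congr 1; omega
    rw [h, pow_add, pow_add, pow_add, pow_one, hadef, hbdef]; ring
  have e2m2k1 : 2 ^ (2 * m - 2 * k + 1) = 2 * (a * a) := by
    have h : (2:ℕ) ^ (2 * m - 2 * k + 1) = 2 ^ ((m - k) + (m - k) + 1) := by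
      congr 1; omega
    rw [h, pow_add, pow_add, pow_one, hadef]; ring
  have hn1 : 2 ^ (2 * m) + 2 ^ (2 * m - 2 * k) - 2 ^ (2 * m - k + 1)
      = (2 ^ m - a) * (2 ^ m - a) := by
    rw [e2m, e2m2k, e2mk1, ← hab]
    have h1 : (a * b) * (a * b) = (a + c) * (a + c) := by rw [hacb]
    have h2 : a * (a * b) = a * (a + c) := by rw [hacb]
    have h3 : (a + c) * (a + c) = a * a + 2 * (a * c) + c * c := by ring
    have h4 : a * (a + c) = a * a + a * c := by ring
    have h5 : a * b - a = c := by omega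
    rw [h1, h2, h3, h4, h5]
    omega
  have hn2 : 2 ^ (2 * m - k + 1) - 2 ^ (2 * m - 2 * k + 1)
      = (2 ^ m - a) * a + a * (2 ^ m - a) := by
    rw [e2mk1, e2m2k1, ← hab]
    have h2 : a * (a * b) = a * (a + c) := by rw [hacb]
    have h4 : a * (a + c) = a * a + a * c := by ring
    have h5 : a * b - a = c := by omega
    rw [h2, h4, h5]
    have h6 : c * a = a * c := by ring
    rw [h6]
    omega
  have hn3 : 2 ^ (2 * m - 2 * k) = a * a := e2m2k
  rw [hn1, hn2, hn3, hKdef]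
  rw [Multiset.replicate_add]
  -- now rearrange
  abel
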